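/- Let B : V → V be a linear operator with P∘B = B and B∘P = B (property (14.5)). If b(X, B(Y)) = b(B(X), Y) for every admissible symmetric bilinear form b and all X, Y ∈ V (property (14.7)), then B = λ·P with λ = (tr B)/(n − 1) (formulas (14.9) and (14.10)). (The key algebraic step of §14 in deriving the additional normality equations.) -/
import Mathlib


/-- The key algebraic step of §14 (formulas (14.5), (14.7), (14.9), (14.10)):
if `P ∘ B = B = B ∘ P` and `B` is symmetric with respect to every admissible symmetric
bilinear form (i.e. every symmetric `b` with `b(X,Y) = b(P X, P Y)`), then
`B = (tr B / (n-1)) · P`. -/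
theorem stmt_10 (n : ℕ) (hn : 2 ≤ n) (V : Type*) [AddCommGroup V] [Module ℝ V]
    [FiniteDimensional ℝ V] (hdim : Module.finrank ℝ V = n)
    (p : V →ₗ[ℝ] ℝ) (hp : p ≠ 0) (v : V) (hv : p v ≠ 0)
    (P : V →ₗ[ℝ] V) (hP : ∀ X, P X = X - (p X / p v) • v)
    (B : V →ₗ[ℝ] V) (hPB : P ∘ₗ B = B) (hBP : B ∘ₗ P = B)
    (hsym : ∀ b : V →ₗ[ℝ] V →ₗ[ℝ] ℝ, (∀ X Y, b X Y = b Y X) →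
      (∀ X Y, b X Y = b (P X) (P Y)) → ∀ X Y, b X (B Y) = b (B X) Y) :
    B = (LinearMap.trace ℝ V B / ((n : ℝ) - 1)) • P := by
  have hpP : ∀ X, p (P X) = 0 := by
    intro X
    simp [hP, map_sub, map_smul, smul_eq_mul, div_mul_cancel₀ _ hv]
  have hPfix : ∀ X, p X = 0 → P X = X := by
    intro X h; simp [hP, h]
  have hPBa : ∀ X, P (B X) = B X := fun X => congrArg (fun f => f X) hPB
  have hBPa : ∀ X, B (P X) = B X := fun X => congrArg (fun f => f X) hBP
  have hpB : ∀ X, p (B X) = 0 := by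
    intro X; rw [← hPBa X]; exact hpP _
  -- key: for f a functional and w in ker p, f w = 0 → f (B w) = 0
  have key : ∀ (w : V), p w = 0 → ∀ f : V →ₗ[ℝ] ℝ, f w = 0 → f (B w) = 0 := by
    intro w hw f hfw
    set b : V →ₗ[ℝ] V →ₗ[ℝ] ℝ :=
      LinearMap.mk₂ ℝ (fun X Y => f (P X) * f (P Y))
        (by intro X X' Y; simp [map_add, add_mul])
        (by intro c X Y; simp [map_smul, smul_eq_mul, mul_assoc])
        (by intro X Y Y'; simp [map_add, mul_add])
        (by intro c X Y; simp [map_smul, smul_eq_mul]; ring) with hb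
    have hbsym : ∀ X Y, b X Y = b Y X := by intro X Y; simp [hb, mul_comm]
    have hbadm : ∀ X Y, b X Y = b (P X) (P Y) := by
      intro X Y
      have hPP : ∀ X, P (P X) = P X := fun X => hPfix _ (hpP X)
      simp [hb, hPP]
    have := hsym b hbsym hbadm (B w) w
    simp only [hb, LinearMap.mk₂_apply, hPBa, hPfix w hw, hfw, mul_zero] at this
    exact mul_self_eq_zero.mp this
  -- hence B w ∈ span {w} for w ∈ ker p
  have hspan : ∀ (w : V), p w = 0 → ∃ c : ℝ, B w = c • w := by
    intro w hw
    have : B w ∈ Submodule.span ℝ {w} := by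
      rw [← Subspace.forall_mem_dualAnnihilator_apply_eq_zero_iff (Submodule.span ℝ {w}) (B w)]
      intro φ hφ
      rw [Submodule.mem_dualAnnihilator] at hφ
      exact key w hw φ (hφ w (Submodule.mem_span_singleton_self w))
    rcases Submodule.mem_span_singleton.mp this with ⟨c, hc⟩
    exact ⟨c, hc.symm⟩
  -- finrank of ker p is n - 1
  have hrange : LinearMap.range p = ⊤ := by
    rw [LinearMap.range_eq_top]
    intro r
    exact ⟨(r / p v) • v, by simp [smul_eq_mul, div_mul_cancel₀ _ hv]⟩
  have hker : Module.finrank ℝ (LinearMap.ker p) = n - 1 := by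
    have h1 := LinearMap.finrank_range_add_finrank_ker p
    rw [hrange, hdim] at h1
    simp only [finrank_top, Module.finrank_self] at h1
    omega
  -- pick a nonzero element of ker p
  have hkerne : LinearMap.ker p ≠ ⊥ := by
    intro h
    rw [h, finrank_bot] at hker
    omega
  obtain ⟨w0, hw0mem', hw0ne⟩ := Submodule.exists_mem_ne_zero_of_ne_bot hkerne
  have hw0mem : p w0 = 0 := LinearMap.mem_ker.mp hw0mem'
  obtain ⟨c0, hc0⟩ := hspan w0 hw0mem
  -- all of ker p has the same eigenvalue c0
  have heig : ∀ (w : V), p w = 0 → B w = c0 • w := by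
    intro w hw
    obtain ⟨c, hc⟩ := hspan w hw
    by_cases hws : w ∈ Submodule.span ℝ {w0}
    · rcases Submodule.mem_span_singleton.mp hws with ⟨a, rfl⟩
      rw [map_smul, hc0, smul_comm]
    · obtain ⟨c', hc'⟩ := hspan (w + w0) (by rw [map_add, hw, hw0mem, add_zero])
      rw [map_add, hc, hc0, smul_add] at hc'
      have hdiff : (c - c') • w = (c' - c0) • w0 := by
        rw [sub_smul, sub_smul]
        linear_combination (norm := module) hc'
      have hcc' : c = c' := by
        by_contra hne
        apply hws
        rw [Submodule.mem_span_singleton]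
        refine ⟨(c' - c0) / (c - c'), ?_⟩
        have h1 : w = (c - c')⁻¹ • ((c - c') • w) := by
          rw [smul_smul, inv_mul_cancel₀ (sub_ne_zero.mpr hne), one_smul]
        rw [h1, hdiff, smul_smul, div_eq_inv_mul, mul_comm]
      rw [hcc', sub_self, zero_smul] at hdiff
      have : c' - c0 = 0 := by
        by_contra h
        exact hw0ne (by simpa [h] using smul_eq_zero.mp hdiff.symm)
      rw [hc, hcc', show c' = c0 by linarith]
  -- hence B = c0 • P
  have hBeq : B = c0 • P := by
    ext X
    rw [LinearMap.smul_apply, ← hBPa X, heig (P X) (hpP X)]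
  -- trace of P is n - 1
  have hproj : LinearMap.IsProj (LinearMap.ker p) P :=
    ⟨fun X => hpP X, fun X hX => hPfix X hX⟩
  have htrP : LinearMap.trace ℝ V P = ((n : ℝ) - 1) := by
    rw [hproj.trace, hker]
    push_cast [Nat.cast_sub (by omega : 1 ≤ n)]
    ring
  have htrB : LinearMap.trace ℝ V B = c0 * ((n : ℝ) - 1) := by
    rw [hBeq, map_smul, smul_eq_mul, htrP]
  rw [htrB, hBeq, mul_div_assoc, div_self (by
    have : (2:ℝ) ≤ (n:ℝ) := by exact_mod_cast hn
    intro h; linarith), mul_one]
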